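/- arXiv:1502.00378 — 4 statements merged into one kernel-verified Lean document; each statement's English description precedes it below -/
import Mathlib

section
/- Let g be a finite simple connected graph with vertex set V, and let M be a minimal dominating set of g such that for every vertex p ∈ V \ M, the edge set {{p,q} : q ∈ M and q adjacent to p in g} is a cut-set of g. Then M is a strong minimal dominating set of g, i.e., M is a minimal dominating set of every connected spanning subgraph of g. -/
open SimpleGraph

variable {V : Type*}

/-- `D` is a dominating set of `g`. -/
def IsDomSet (g : SimpleGraph V) (D : Set V) : Prop :=
  ∀ v ∉ D, ∃ u ∈ D, g.Adj v u

/-- `D` is a minimal dominating set of `g`. -/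
def IsMinDomSet (g : SimpleGraph V) (D : Set V) : Prop :=
  IsDomSet g D ∧ ∀ D' ⊂ D, ¬ IsDomSet g D'

/-- `M` is a strong minimal dominating set of `g`: it is a minimal dominating set
of every connected spanning subgraph of `g`. -/
def IsSMDS (g : SimpleGraph V) (M : Set V) : Prop :=
  ∀ h : SimpleGraph V, h ≤ g → h.Connected → IsMinDomSet h M

/-- The set of edges joining `p` to its neighbors in `M`. -/
def domEdges (g : SimpleGraph V) (M : Set V) (p : V) : Set (Sym2 V) :=
  {e | ∃ q ∈ M, g.Adj p q ∧ e = s(p, q)}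

/-- `F` is a cut-set of the connected graph `g`: deleting `F` disconnects `g`. -/
def IsCutSet (g : SimpleGraph V) (F : Set (Sym2 V)) : Prop :=
  ¬ (g.deleteEdges F).Connected

theorem cutsets_give_smds [Fintype V] (g : SimpleGraph V) (hg : g.Connected)
    (M : Set V) (hM : IsMinDomSet g M)
    (hcut : ∀ p ∉ M, IsCutSet g (domEdges g M p)) :
    IsSMDS g M := by
  intro h hle hconn
  constructor
  · intro p hp
    by_contra hcon
    push_neg at hcon
    apply hcut p hp
    have hle' : h ≤ g.deleteEdges (domEdges g M p) := by
      intro a b hab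
      rw [SimpleGraph.deleteEdges_adj]
      refine ⟨hle hab, ?_⟩
      rintro ⟨q, hq, hadj, he⟩
      rw [Sym2.eq_iff] at he
      rcases he with ⟨ha, hb⟩ | ⟨ha, hb⟩
      · exact hcon q hq (ha ▸ hb ▸ hab)
      · exact hcon q hq (ha ▸ hb ▸ hab.symm)
    haveI := hconn.nonempty
    exact SimpleGraph.Connected.mk fun a b => (hconn.preconnected a b).mono hle'
  · intro D' hD' hdom
    exact hM.2 D' hD' fun v hv =>
      (hdom v hv).imp fun u ⟨hu, ha⟩ => ⟨hu, hle ha⟩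
end

section
/- Let g be a finite simple connected graph and M a minimal dominating set of g. Then M is a strong minimal dominating set of g if and only if for every vertex p outside M, the set of edges joining p to its neighbors in M is a cut-set of g. -/
open SimpleGraph

variable {V : Type*}

theorem smds_iff_cutsets [Fintype V] (g : SimpleGraph V) (hg : g.Connected)
    (M : Set V) (hM : IsMinDomSet g M) :
    IsSMDS g M ↔ ∀ p ∉ M, IsCutSet g (domEdges g M p) := by
  constructor
  · intro hS p hp hcon
    obtain ⟨u, hu, hadj⟩ := (hS _ (deleteEdges_le _) hcon).1 p hp
    rw [deleteEdges_adj] at hadj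
    exact hadj.2 ⟨u, hu, hadj.1, rfl⟩
  · intro hC h hle hcon
    constructor
    · intro p hp
      by_contra hno
      push_neg at hno
      apply hC p hp
      apply hcon.mono
      intro a b hab
      rw [deleteEdges_adj]
      refine ⟨hle hab, ?_⟩
      rintro ⟨q, hq, hadj, he⟩
      rw [Sym2.eq_iff] at he
      rcases he with ⟨h1, h2⟩ | ⟨h1, h2⟩
      · exact hno q hq (h1 ▸ h2 ▸ hab)
      · exact hno q hq (h1 ▸ h2 ▸ hab.symm)
    · intro D' hD' hdom
      exact hM.2 D' hD' (fun v hv => (hdom v hv).imp fun u hu => ⟨hu.1, hle hu.2⟩)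
end

section
/- For every n ≥ 3, the complete graph K_n on n vertices admits no strong minimal dominating set. -/
open SimpleGraph

variable {V : Type*}

/-- The star graph centered at `c`. -/
def starGraph (c : V) : SimpleGraph V where
  Adj a b := a ≠ b ∧ (a = c ∨ b = c)
  symm := by constructor; intro a b ⟨h1, h2⟩; exact ⟨h1.symm, h2.symm⟩
  loopless := by constructor; intro a ⟨h1, _⟩; exact h1 rfl

lemma starGraph_connected [Nonempty V] (c : V) : (_root_.starGraph c).Connected := by
  refine ⟨fun u v => ?_⟩
  have key : ∀ w : V, (_root_.starGraph c).Reachable w c := by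
    intro w
    by_cases hw : w = c
    · exact hw ▸ Reachable.refl _
    · exact Adj.reachable ⟨hw, Or.inr rfl⟩
  exact (key u).trans (key v).symm

theorem Kn_no_smds (n : ℕ) (hn : 3 ≤ n) :
    ¬ ∃ M : Set (Fin n), IsSMDS (⊤ : SimpleGraph (Fin n)) M := by
  rintro ⟨M, hM⟩
  have hne : Nonempty (Fin n) := ⟨⟨0, by omega⟩⟩
  -- M is a minimal dominating set of K_n
  have htop : IsMinDomSet (⊤ : SimpleGraph (Fin n)) M :=
    hM ⊤ le_rfl (by
      refine ⟨fun u v => ?_⟩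
      by_cases h : u = v
      · exact h ▸ Reachable.refl _
      · exact Adj.reachable h)
  -- M is nonempty
  obtain ⟨m, hm⟩ : ∃ m, m ∈ M := by
    by_contra h
    push_neg at h
    obtain ⟨v⟩ := hne
    obtain ⟨u, hu, _⟩ := htop.1 v (h v)
    exact h u hu
  -- every element of M equals m
  have hsingle : ∀ x ∈ M, x = m := by
    intro x hx
    by_contra hxm
    have hsub : ({m} : Set (Fin n)) ⊂ M := by
      constructor
      · intro y hy; simp at hy; exact hy ▸ hm
      · intro hMs
        exact hxm (Set.mem_singleton_iff.mp (hMs hx))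
    refine htop.2 {m} hsub ?_
    intro v hv
    refine ⟨m, rfl, ?_⟩
    simp only [SimpleGraph.top_adj]
    intro h; exact hv (h ▸ rfl)
  -- pick c ≠ m and w ∉ {c, m}
  have x0 : Fin n := ⟨0, by omega⟩
  obtain ⟨c, w, hcw, hcm, hwm⟩ : ∃ c w : Fin n, c ≠ w ∧ c ≠ m ∧ w ≠ m := by
    set a : Fin n := ⟨0, by omega⟩
    set b : Fin n := ⟨1, by omega⟩
    set d : Fin n := ⟨2, by omega⟩
    have hab : a ≠ b := by simp [a, b, Fin.ext_iff]
    have had : a ≠ d := by simp [a, d, Fin.ext_iff]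
    have hbd : b ≠ d := by simp [b, d, Fin.ext_iff]
    by_cases h1 : m = a
    · exact ⟨b, d, hbd, by rw [h1]; exact hab.symm, by rw [h1]; exact had.symm⟩
    · by_cases h2 : m = b
      · exact ⟨a, d, had, by rw [h2]; exact hab, by rw [h2]; exact hbd.symm⟩
      · exact ⟨a, b, hab, fun h => h1 h.symm, fun h => h2 h.symm⟩
  -- apply SMDS to the star centered at c
  have hstar := hM (_root_.starGraph c) (fun a b hab => hab.1) (starGraph_connected c)
  have hwM : w ∉ M := fun h => hwm (hsingle w h)
  obtain ⟨u, huM, hadj⟩ := hstar.1 w hwM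
  have hum : u = m := hsingle u huM
  rcases hadj.2 with h | h
  · exact hcw h.symm
  · exact hcm ((hum ▸ h : m = c).symm)
end

section
/- Consider a discrete-time time-varying graph on a finite vertex set V given by a presence function ρ : E × ℕ → Bool on a static edge set E ⊆ V × V. Suppose that for every time t and every pair of distinct vertices p, q there exists a journey from p to q starting after time t (a journey is a finite sequence of edges forming a path from p to q together with strictly increasing times at which each edge is present). Then the eventual underlying graph (V, E^ω), where E^ω is the set of edges e ∈ E such that ρ(e,t) = 1 for infinitely many t, is a connected graph. -/
open SimpleGraph

variable {V : Type*}

/-- A journey in the TVG `(g, ρ)`: `Journey g ρ p q t₁ t₂` means there is a sequence of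
adjacent edges from `p` to `q` crossed at strictly increasing times `t₁ < ⋯ < t₂`,
each edge being present (per `ρ`) at the time it is crossed. -/
inductive Journey (g : SimpleGraph V) (ρ : Sym2 V → ℕ → Bool) : V → V → ℕ → ℕ → Prop
  | single {p q : V} {t : ℕ} (hadj : g.Adj p q) (hρ : ρ s(p, q) t = true) :
      Journey g ρ p q t t
  | cons {p q r : V} {t t' t'' : ℕ} (hadj : g.Adj p q) (hρ : ρ s(p, q) t = true)
      (hlt : t < t') (rest : Journey g ρ q r t' t'') : Journey g ρ p r t t''

theorem eventual_underlying_connected [Fintype V] [Nonempty V]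
    (g : SimpleGraph V) (ρ : Sym2 V → ℕ → Bool)
    (hjour : ∀ t : ℕ, ∀ p q : V, p ≠ q → ∃ t₁ t₂ : ℕ, t < t₁ ∧ Journey g ρ p q t₁ t₂) :
    (SimpleGraph.fromEdgeSet
      {e | e ∈ g.edgeSet ∧ {t : ℕ | ρ e t = true}.Infinite}).Connected := by

  classical
  set H := SimpleGraph.fromEdgeSet
      {e | e ∈ g.edgeSet ∧ {t : ℕ | ρ e t = true}.Infinite} with hH
  -- bound for edges with finitely many presence times
  let f : Sym2 V → ℕ := fun e =>
    if h : {t : ℕ | ρ e t = true}.Finite then (h.toFinset.sup id) else 0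
  let T : ℕ := Finset.univ.sup f
  have hinf : ∀ e : Sym2 V, ∀ t : ℕ, T < t → ρ e t = true →
      {t : ℕ | ρ e t = true}.Infinite := by
    intro e t hT hρ
    by_contra hfin
    rw [Set.not_infinite] at hfin
    have h1 : t ≤ f e := by
      simp only [f, dif_pos hfin]
      exact Finset.le_sup (f := id) (hfin.mem_toFinset.mpr hρ)
    have h2 : f e ≤ T := Finset.le_sup (Finset.mem_univ e)
    omega
  have key : ∀ p q t₁ t₂, Journey g ρ p q t₁ t₂ → T < t₁ → H.Reachable p q := by
    intro p q t₁ t₂ j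
    induction j with
    | single hadj hρ =>
      intro hT
      exact SimpleGraph.Adj.reachable
        ((SimpleGraph.fromEdgeSet_adj _).mpr
          ⟨⟨(SimpleGraph.mem_edgeSet g).mpr hadj, hinf _ _ hT hρ⟩, hadj.ne⟩)
    | cons hadj hρ hlt rest ih =>
      intro hT
      refine SimpleGraph.Reachable.trans ?_ (ih (by omega))
      exact SimpleGraph.Adj.reachable
        ((SimpleGraph.fromEdgeSet_adj _).mpr
          ⟨⟨(SimpleGraph.mem_edgeSet g).mpr hadj, hinf _ _ hT hρ⟩, hadj.ne⟩)
  constructor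
  intro p q
  by_cases hpq : p = q
  · exact hpq ▸ SimpleGraph.Reachable.refl p
  · obtain ⟨t₁, t₂, hT, j⟩ := hjour T p q hpq
    exact key p q t₁ t₂ j hT
end
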